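/- Define F_{n,k}(x) = sum_{l=k}^n f_{n,l} * binomial(l,k) * x^(l-k) where f_{n,l} = binomial(n-1,l-1) n^(n-l). Then F_{n,k}(x) = binomial(n,k) * (x+k) * (x+n)^(n-k-1) for all n >= 1 and 0 <= k <= n-1. -/

import Mathlib

/-- The forest numbers: `forestNum n l` is the number of `l`-component forests of
rooted trees on `n` labeled vertices, given by `binomial(n-1, l-1) * n^(n-l)`
for `l ≥ 1`, with the convention `forestNum n 0 = δ_{n,0}`. -/
def forestNum (n l : ℕ) : ℕ :=
  if l = 0 then (if n = 0 then 1 else 0)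
  else Nat.choose (n - 1) (l - 1) * n ^ (n - l)

/-- Key coefficient identity:
`f_{n,k+m} C(k+m,k) + C(n,k)(M+1)C(M,m) n^{M-m} = C(n,k) C(M+1,m) n^{M+1-m}`
where `n = k + M + 1`. -/
lemma forest_key (k M m : ℕ) (hm : m ≤ M + 1) :
    forestNum (k + M + 1) (k + m) * Nat.choose (k + m) k
      + Nat.choose (k + M + 1) k * (M + 1) * Nat.choose M m * (k + M + 1) ^ (M - m)
    = Nat.choose (k + M + 1) k * Nat.choose (M + 1) m * (k + M + 1) ^ (M + 1 - m) := by
  rcases Nat.lt_or_ge m (M + 1) with hmM | hmM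
  · -- m ≤ M
    obtain ⟨d, rfl⟩ : ∃ d, M = m + d := ⟨M - m, by omega⟩
    have e1 : k + (m + d) + 1 - (k + m) = d + 1 := by omega
    have e2 : m + d - m = d := by omega
    have e3 : m + d + 1 - m = d + 1 := by omega
    rcases Nat.eq_zero_or_pos (k + m) with ha | ha
    · obtain ⟨rfl, rfl⟩ : k = 0 ∧ m = 0 := by omega
      simp only [forestNum, e1, e2, e3]
      simp [pow_succ, Nat.mul_comm]
    · -- k + m ≥ 1
      have h1 : forestNum (k + (m + d) + 1) (k + m)
          = Nat.choose (k + m + d) (k + m - 1) * (k + (m + d) + 1) ^ (d + 1) := by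
        simp only [forestNum, if_neg (by omega : ¬ k + m = 0), e1]
        congr 2
        omega
      have h3 : (k + m + d + 1) * Nat.choose (k + m + d) (k + m - 1)
          = Nat.choose (k + m + d + 1) (k + m) * (k + m) := by
        have := Nat.add_one_mul_choose_eq (k + m + d) (k + m - 1)
        have e4 : k + m - 1 + 1 = k + m := by omega
        simp only [Nat.succ_eq_add_one, e4] at this
        exact this
      have h4 : Nat.choose (k + m + d + 1) (k + m) * Nat.choose (k + m) k
          = Nat.choose (k + m + d + 1) k * Nat.choose (m + d + 1) m := by
        have := Nat.choose_mul (n := k + m + d + 1)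
          (show k ≤ k + m by omega)
        have e5 : k + m + d + 1 - k = m + d + 1 := by omega
        have e6 : k + m - k = m := by omega
        rwa [e5, e6] at this
      have h5 : Nat.choose (m + d) m * (m + d + 1)
          = Nat.choose (m + d + 1) m * (d + 1) := by
        have := Nat.choose_mul_succ_eq (m + d) m
        rwa [e3] at this
      rw [h1, e2, e3]
      have e7 : k + (m + d) + 1 = k + m + d + 1 := by omega
      rw [e7]
      zify at h3 h4 h5 ⊢
      linear_combination ((k + m + d + 1 : ℤ) ^ d * (Nat.choose (k + m) k : ℤ)) * h3
        + ((k + m : ℤ) * (k + m + d + 1 : ℤ) ^ d) * h4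
        + ((Nat.choose (k + m + d + 1) k : ℤ) * (k + m + d + 1 : ℤ) ^ d) * h5
  · -- m = M + 1
    obtain rfl : m = M + 1 := by omega
    have h0 : Nat.choose M (M + 1) = 0 := Nat.choose_eq_zero_of_lt (by omega)
    have h1 : forestNum (k + M + 1) (k + (M + 1)) = 1 := by
      simp only [forestNum, if_neg (by omega : ¬ k + (M + 1) = 0)]
      have e : k + M + 1 - (k + (M + 1)) = 0 := by omega
      have e2 : k + M + 1 - 1 = k + (M + 1) - 1 := by omega
      rw [e, e2, Nat.choose_self, pow_zero, mul_one]
    have e8 : k + (M + 1) = k + M + 1 := by omega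
    rw [h1, h0, e8]
    simp

/-- The binomial partial row-generating polynomials
`F_{n,k}(x) = ∑_{l=k}^n f_{n,l} binomial(l,k) x^(l-k)` of the forest triangle
satisfy `F_{n,k}(x) = binomial(n,k) (x+k) (x+n)^{n-k-1}` for all `n ≥ 1` and
`0 ≤ k ≤ n-1` (as a polynomial identity, i.e. in every commutative ring). -/
theorem forest_partial_rowgen (R : Type*) [CommRing R] (n k : ℕ) (hn : 1 ≤ n)
    (hk : k ≤ n - 1) (x : R) :
    ∑ l ∈ Finset.Icc k n, (forestNum n l : R) * (Nat.choose l k : R) * x ^ (l - k)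
      = (Nat.choose n k : R) * (x + (k : R)) * (x + (n : R)) ^ (n - k - 1) := by
  obtain ⟨M, rfl⟩ : ∃ M, n = k + M + 1 := ⟨n - k - 1, by omega⟩
  have eM : k + M + 1 - k - 1 = M := by omega
  rw [eM]
  -- rewrite the left-hand side as a sum over `range (M + 2)`
  have hIcc : Finset.Icc k (k + M + 1) = Finset.Ico k (k + M + 1 + 1) :=
    (Finset.Ico_add_one_right_eq_Icc k (k + M + 1)).symm
  rw [hIcc, Finset.sum_Ico_eq_sum_range]
  have erange : k + M + 1 + 1 - k = M + 1 + 1 := by omega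
  rw [erange]
  -- rewrite the right-hand side
  have hxk : (x + (k : R)) = (x + (k + M + 1 : ℕ)) - ((M : R) + 1) := by
    push_cast; ring
  rw [hxk]
  have hpow : ((Nat.choose (k + M + 1) k : R)) * ((x + ((k + M + 1 : ℕ) : R)) - ((M : R) + 1))
        * (x + ((k + M + 1 : ℕ) : R)) ^ M
      = (Nat.choose (k + M + 1) k : R) * (x + ((k + M + 1 : ℕ) : R)) ^ (M + 1)
        - (Nat.choose (k + M + 1) k : R) * ((M : R) + 1) * (x + ((k + M + 1 : ℕ) : R)) ^ M := by
    ring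
  rw [hpow, add_pow, add_pow]
  rw [Finset.mul_sum, Finset.mul_sum]
  have hB : ∑ i ∈ Finset.range (M + 1),
        ((Nat.choose (k + M + 1) k : ℕ) : R) * ((M : R) + 1)
          * (x ^ i * ((k + M + 1 : ℕ) : R) ^ (M - i) * ((Nat.choose M i : ℕ) : R))
      = ∑ i ∈ Finset.range (M + 1 + 1),
        ((Nat.choose (k + M + 1) k : ℕ) : R) * ((M : R) + 1)
          * (x ^ i * ((k + M + 1 : ℕ) : R) ^ (M - i) * ((Nat.choose M i : ℕ) : R)) := by
    rw [Finset.sum_range_succ (fun i => ((Nat.choose (k + M + 1) k : ℕ) : R) * ((M : R) + 1)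
          * (x ^ i * ((k + M + 1 : ℕ) : R) ^ (M - i) * ((Nat.choose M i : ℕ) : R))) (M + 1)]
    simp [Nat.choose_eq_zero_of_lt (Nat.lt_succ_self M)]
  rw [hB, ← Finset.sum_sub_distrib]
  rw [show ((k + M + 1 : ℕ) : R) = (k : R) + (M : R) + 1 by push_cast; ring]
  -- extend: range (M+1+1) = range (M+2); both sums over range (M+2) already
  apply Finset.sum_congr rfl
  intro m hm
  have hmle : m ≤ M + 1 := by
    simp only [Finset.mem_range] at hm; omega
  have key := forest_key k M m hmle
  have keyR : ((forestNum (k + M + 1) (k + m) * Nat.choose (k + m) k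
      + Nat.choose (k + M + 1) k * (M + 1) * Nat.choose M m * (k + M + 1) ^ (M - m) : ℕ) : R)
      = ((Nat.choose (k + M + 1) k * Nat.choose (M + 1) m
        * (k + M + 1) ^ (M + 1 - m) : ℕ) : R) := by
    exact_mod_cast congrArg (Nat.cast : ℕ → R) key
  push_cast at keyR
  have exp : k + m - k = m := by omega
  rw [exp]
  linear_combination x ^ m * keyR
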